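/- Let Γ be a finite set of nonnegative integers with 0 ∈ Γ, #Γ = N, and let a, b be reals with b − a ≤ N. If F ∈ L²(a,b) satisfies ∫_a^b t^γ e^{-2πint} F(t) dt = 0 for all γ ∈ Γ and all n ∈ ℤ, then F = 0 almost everywhere. Equivalently, the system {t^γ e^{2πint} : n ∈ ℤ, γ ∈ Γ} is complete in L²(a,b). -/

import Mathlib

set_option maxHeartbeats 1000000

open MeasureTheory Complex Real
open Set

/-- A Chebyshev-system property of monomials with distinct natural exponents on `(0, ∞)`. -/
lemma cheb : ∀ (m : ℕ) (e : Fin m → ℕ), StrictMono e → ∀ (c : Fin m → ℝ) (x : Fin m → ℝ),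
    StrictMono x → (∀ i, 0 < x i) → (∀ i, ∑ j, c j * x i ^ e j = 0) → ∀ j, c j = 0 := by
  intro m
  induction m with
  | zero => intro e he c x hx hpos hz j; exact j.elim0
  | succ m IH =>
    intro e he c x hx hpos hz
    -- divide by x ^ (e 0)
    set d : Fin (m + 1) → ℕ := fun j => e j - e 0 with hd
    have hd0 : d 0 = 0 := Nat.sub_self _
    have hemono : ∀ j, e 0 ≤ e j := fun j => he.monotone (Fin.zero_le j)
    have hdmono : StrictMono d := fun i j hij =>
      Nat.sub_lt_sub_right (hemono i) (he hij)
    set g : ℝ → ℝ := fun t => ∑ j, c j * t ^ d j with hg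
    have hgz : ∀ i, g (x i) = 0 := by
      intro i
      have h1 : (x i) ^ (e 0) * g (x i) = 0 := by
        rw [hg]
        simp only
        rw [Finset.mul_sum]
        rw [← hz i]
        refine Finset.sum_congr rfl fun j _ => ?_
        have : e j = e 0 + d j := by
          simp [hd, Nat.add_sub_cancel' (hemono j)]
        rw [this, pow_add]; ring
      rcases mul_eq_zero.mp h1 with h | h
      · exact absurd h (pow_ne_zero _ (hpos i).ne')
      · exact h
    have hderiv : ∀ t : ℝ, HasDerivAt g (∑ j, c j * ((d j : ℝ) * t ^ (d j - 1))) t := by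
      intro t
      apply HasDerivAt.fun_sum
      intro j _
      exact (hasDerivAt_pow (d j) t).const_mul (c j)
    -- Rolle between consecutive zeros
    have hrolle : ∀ i : Fin m, ∃ y ∈ Ioo (x i.castSucc) (x i.succ),
        (∑ j, c j * ((d j : ℝ) * y ^ (d j - 1))) = 0 := by
      intro i
      have hlt : x i.castSucc < x i.succ := hx (Fin.castSucc_lt_succ (i := i))
      exact exists_hasDerivAt_eq_zero hlt
        (fun t _ => (hderiv t).continuousAt.continuousWithinAt)
        (by rw [hgz, hgz]) (fun y _ => hderiv y)
    choose y hy hyz using hrolle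
    have hymono : StrictMono y := by
      intro i j hij
      calc y i < x i.succ := (hy i).2
        _ ≤ x j.castSucc := hx.monotone (by
            rw [Fin.le_def]; rw [Fin.lt_def] at hij
            simp only [Fin.val_succ, Fin.coe_castSucc]; omega)
        _ < y j := (hy j).1
    have hypos : ∀ i, 0 < y i := fun i => lt_trans (hpos _) (hy i).1
    have hd1 : ∀ j : Fin m, 1 ≤ d j.succ := by
      intro j
      have := hdmono (Fin.succ_pos j)
      omega
    set e' : Fin m → ℕ := fun j => d j.succ - 1 with he'
    have he'mono : StrictMono e' := by
      intro i j hij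
      have := hdmono (Fin.succ_lt_succ_iff.mpr hij)
      have := hd1 i
      simp only [he']
      omega
    have hz' : ∀ i, ∑ j, (c j.succ * (d j.succ : ℝ)) * y i ^ e' j = 0 := by
      intro i
      have := hyz i
      rw [Fin.sum_univ_succ] at this
      rw [hd0] at this
      simp only [Nat.cast_zero, zero_mul, mul_zero, zero_add] at this
      rw [← this]
      exact Finset.sum_congr rfl fun j _ => by ring
    have hc' := IH e' he'mono (fun j => c j.succ * (d j.succ : ℝ)) y hymono hypos hz'
    have hcsucc : ∀ j : Fin m, c j.succ = 0 := by
      intro j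
      have := hc' j
      have hdj : (d j.succ : ℝ) ≠ 0 := by
        have := hd1 j; positivity
      exact (mul_eq_zero.mp this).resolve_right hdj
    have hc0 : c 0 = 0 := by
      have := hz 0
      rw [Fin.sum_univ_succ] at this
      simp only [hcsucc, zero_mul, Finset.sum_const_zero, add_zero] at this
      rcases mul_eq_zero.mp this with h | h
      · exact h
      · exact absurd h (pow_ne_zero _ (hpos 0).ne')
    intro j
    refine Fin.cases hc0 hcsucc j

/-- Generalized Vandermonde determinant with distinct positive nodes is nonzero. -/
lemma vdm_det_ne_zero (m : ℕ) (e : Fin m → ℕ) (he : StrictMono e) (x : Fin m → ℝ)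
    (hx : StrictMono x) (hpos : ∀ i, 0 < x i) :
    (Matrix.of fun i j => x i ^ e j : Matrix (Fin m) (Fin m) ℝ).det ≠ 0 := by
  intro h
  obtain ⟨v, hv0, hv⟩ := Matrix.exists_mulVec_eq_zero_iff.mpr h
  apply hv0
  funext j
  refine cheb m e he v x hx hpos (fun i => ?_) j
  have := congrFun hv i
  simpa [Matrix.mulVec, dotProduct, mul_comm] using this

/-- The set of shifts `s` for which the complex generalized Vandermonde system with nodes
`s + k`, `k ∈ K`, exponents in `T`, has a nontrivial kernel, is finite. -/
lemma badFinite (K : Finset ℤ) (T : Finset ℕ) (hcard : T.card = K.card) :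
    {s : ℝ | ∃ c : ℤ → ℂ, (∀ γ ∈ T, ∑ k ∈ K, c k * ((s + (k : ℝ) : ℝ) : ℂ) ^ γ = 0) ∧
      ¬(∀ k ∈ K, c k = 0)}.Finite := by
  set m := K.card with hm
  rcases Nat.eq_zero_or_pos m with hm0 | hmpos
  · have hK : K = ∅ := Finset.card_eq_zero.mp hm0
    subst hK
    convert Set.finite_empty
    ext s
    simp only [Set.mem_setOf_eq, Set.mem_empty_iff_false, iff_false, not_exists]
    intro c hc
    exact hc.2 (fun k hk => absurd hk (Finset.notMem_empty k))
  have eK : Fin m ≃o K := K.orderIsoOfFin rfl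
  have eT : Fin m ≃o T := T.orderIsoOfFin hcard
  -- the determinant polynomial
  set Q : Polynomial ℝ :=
    (Matrix.of fun i j => (Polynomial.X + Polynomial.C ((eK i : ℤ) : ℝ)) ^ ((eT j : ℕ))
      : Matrix (Fin m) (Fin m) (Polynomial ℝ)).det with hQ
  have hQeval : ∀ s : ℝ, Q.eval s =
      (Matrix.of fun i j => (s + ((eK i : ℤ) : ℝ)) ^ ((eT j : ℕ))
        : Matrix (Fin m) (Fin m) ℝ).det := by
    intro s
    rw [hQ, ← Polynomial.coe_evalRingHom, RingHom.map_det]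
    congr 1
    ext i j
    simp [Matrix.map, RingHom.mapMatrix]
  have hKmono : StrictMono fun i : Fin m => ((eK i : ℤ) : ℝ) := by
    intro i j hij
    exact_mod_cast Int.cast_lt.mpr (by exact_mod_cast (eK.lt_iff_lt.mpr hij))
  -- Q is not the zero polynomial: evaluate at a large point
  obtain ⟨s₀, hs₀⟩ : ∃ s₀ : ℝ, ∀ i : Fin m, 0 < s₀ + ((eK i : ℤ) : ℝ) := by
    refine ⟨1 - ((eK ⟨0, hmpos⟩ : ℤ) : ℝ), fun i => ?_⟩
    have h1 : eK ⟨0, hmpos⟩ ≤ eK i := eK.monotone (by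
      exact Fin.mk_le_of_le_val (Nat.zero_le _))
    have h2 : (eK ⟨0, hmpos⟩ : ℤ) ≤ (eK i : ℤ) := h1
    have : ((eK ⟨0, hmpos⟩ : ℤ) : ℝ) ≤ ((eK i : ℤ) : ℝ) := by exact_mod_cast h2
    linarith
  have hTmono : StrictMono fun j : Fin m => ((eT j : ℕ)) := by
    intro i j hij
    exact_mod_cast eT.lt_iff_lt.mpr hij
  have hQne : Q ≠ 0 := by
    intro h
    have := hQeval s₀
    rw [h] at this
    simp only [Polynomial.eval_zero] at this
    exact vdm_det_ne_zero m _ hTmono _ (fun i j hij => by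
        have := hKmono hij; dsimp at this ⊢; linarith) hs₀ this.symm
  refine Set.Finite.subset (Polynomial.finite_setOf_isRoot hQne) ?_
  rintro s ⟨c, hc, hcne⟩
  -- build complex system
  set M : Matrix (Fin m) (Fin m) ℂ :=
    Matrix.of fun i j => ((s + ((eK i : ℤ) : ℝ) : ℝ) : ℂ) ^ ((eT j : ℕ)) with hM
  have hdetM : M.det = 0 := by
    rw [← Matrix.exists_vecMul_eq_zero_iff]
    push_neg at hcne
    obtain ⟨k, hkK, hck⟩ := hcne
    refine ⟨fun i => c (eK i), ?_, ?_⟩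
    · intro h
      apply hck
      have := congrFun h (eK.symm ⟨k, hkK⟩)
      simpa using this
    · funext j
      show Matrix.vecMul (fun i => c (eK i)) M j = 0
      have hcalc : Matrix.vecMul (fun i => c (eK i)) M j
          = ∑ i : Fin m, c (eK i) * ((s + ((eK i : ℤ) : ℝ) : ℝ) : ℂ) ^ ((eT j : ℕ)) := by
        simp [Matrix.vecMul, dotProduct, hM]
      rw [hcalc]
      have h2 : ∑ i : Fin m, c (eK i) * ((s + ((eK i : ℤ) : ℝ) : ℝ) : ℂ) ^ ((eT j : ℕ))
          = ∑ k : K, c (k : ℤ) * ((s + ((k : ℤ) : ℝ) : ℝ) : ℂ) ^ ((eT j : ℕ)) :=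
        Equiv.sum_comp eK.toEquiv (fun k : K => c (k : ℤ) * ((s + ((k : ℤ) : ℝ) : ℝ) : ℂ) ^ ((eT j : ℕ)))
      rw [h2, Finset.sum_coe_sort K (fun k => c k * ((s + (k : ℝ) : ℝ) : ℂ) ^ ((eT j : ℕ)))]
      exact hc (eT j) (eT j).2
  have hcast : (Complex.ofRealHom (Q.eval s)) = M.det := by
    rw [hQeval s, RingHom.map_det]
    congr 1
    ext i j
    simp [hM]
  have h2 : (Complex.ofRealHom (Q.eval s)) = 0 := hcast.trans hdetM
  simp only [Polynomial.IsRoot, Set.mem_setOf_eq]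
  rw [Complex.ofRealHom_eq_coe] at h2
  exact_mod_cast h2

/-- Fourier uniqueness on (0,1): an L² function whose Fourier coefficients all vanish is 0 a.e. -/
lemma fourier_unique (f : ℝ → ℂ) (hmeas : Measurable f)
    (hf : MemLp f 2 (volume.restrict (Set.Ioo (0:ℝ) 1)))
    (h : ∀ n : ℤ, ∫ s in Set.Ioo (0:ℝ) 1, Complex.exp (-2*(π:ℂ)*Complex.I*(n:ℂ)*(s:ℂ)) * f s = 0) :
    ∀ᵐ s ∂(volume.restrict (Set.Ioo (0:ℝ) 1)), f s = 0 := by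
  haveI : Fact ((0:ℝ) < 1) := ⟨one_pos⟩
  have hIoc : volume.restrict (Set.Ioo (0:ℝ) 1) = volume.restrict (Set.Ioc (0:ℝ) 1) :=
    Measure.restrict_congr_set Ioo_ae_eq_Ioc
  set H : AddCircle (1:ℝ) → ℂ := AddCircle.liftIoc 1 0 f with hH
  have hHmeas : Measurable H := by
    exact (hmeas.comp measurable_subtype_coe).comp (AddCircle.measurableEquivIoc (1:ℝ) 0).measurable
  have hmp := AddCircle.measurePreserving_mk (1:ℝ) (0:ℝ)
  have hmk : Measurable ((↑) : ℝ → AddCircle (1:ℝ)) := AddCircle.measurable_mk'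
  have hcomp : ∀ x ∈ Set.Ioc (0:ℝ) 1, H ((x : ℝ) : AddCircle (1:ℝ)) = f x := by
    intro x hx
    exact AddCircle.liftIoc_coe_apply (by simpa using hx)
  have hHcf : (H ∘ ((↑) : ℝ → AddCircle (1:ℝ))) =ᵐ[volume.restrict (Set.Ioc (0:ℝ) 1)] f := by
    refine (ae_restrict_mem measurableSet_Ioc).mono fun x hx => ?_
    exact hcomp x hx
  have hvol : (volume : Measure (AddCircle (1:ℝ))) = AddCircle.haarAddCircle := by
    rw [AddCircle.volume_eq_smul_haarAddCircle]
    simp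
  have hHmem : MemLp H 2 (AddCircle.haarAddCircle (T := (1:ℝ))) := by
    rw [← hvol]
    refine ⟨hHmeas.aestronglyMeasurable, ?_⟩
    have hmapeq : (volume : Measure (AddCircle (1:ℝ))) =
        Measure.map ((↑) : ℝ → AddCircle (1:ℝ)) (volume.restrict (Set.Ioc (0:ℝ) (0+1))) :=
      hmp.map_eq.symm
    rw [hmapeq, eLpNorm_map_measure (by rw [← hmapeq]; exact hHmeas.aestronglyMeasurable)
      hmk.aemeasurable]
    have : eLpNorm (H ∘ ((↑) : ℝ → AddCircle (1:ℝ))) 2 (volume.restrict (Set.Ioc (0:ℝ) (0+1)))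
        = eLpNorm f 2 (volume.restrict (Set.Ioc (0:ℝ) 1)) := by
      rw [zero_add]
      exact eLpNorm_congr_ae hHcf
    rw [this, ← hIoc]
    exact hf.2
  set fL := hHmem.toLp H with hfL
  have hcoeff : ∀ n : ℤ, fourierCoeff (⇑fL) n = 0 := by
    intro n
    have h1 : fourierCoeff (⇑fL) n = fourierCoeff H n := by
      unfold fourierCoeff
      refine integral_congr_ae ?_
      filter_upwards [hHmem.coeFn_toLp] with x hx
      simp only [hfL, hx]
    rw [h1, fourierCoeff_eq_intervalIntegral H n 0]
    rw [zero_add]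
    have h2 : (∫ x in (0:ℝ)..1, (fourier (-n) ((x:ℝ) : AddCircle (1:ℝ))) • H ((x:ℝ) : AddCircle (1:ℝ)))
        = ∫ x in Set.Ioo (0:ℝ) 1, Complex.exp (-2*(π:ℂ)*Complex.I*(n:ℂ)*(x:ℂ)) * f x := by
      rw [intervalIntegral.integral_of_le (zero_le_one), integral_Ioc_eq_integral_Ioo]
      refine setIntegral_congr_fun measurableSet_Ioo fun x hx => ?_
      have hx' : x ∈ Set.Ioc (0:ℝ) 1 := Ioo_subset_Ioc_self hx
      rw [hcomp x hx', smul_eq_mul]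
      congr 1
      rw [fourier_coe_apply]
      congr 1
      push_cast
      ring
    rw [h2, h n, smul_zero]
  have hrepr : fourierBasis.repr fL = 0 := by
    ext n
    rw [fourierBasis_repr]
    simpa using hcoeff n
  have hfL0 : fL = 0 := by
    have := fourierBasis.repr.map_eq_zero_iff.mp hrepr
    exact this
  have hH0 : H =ᵐ[AddCircle.haarAddCircle (T := (1:ℝ))] 0 := by
    refine hHmem.coeFn_toLp.symm.trans ?_
    rw [← hfL]
    rw [hfL0]
    exact Lp.coeFn_zero _ _ _
  have hpull : (H ∘ ((↑) : ℝ → AddCircle (1:ℝ))) =ᵐ[volume.restrict (Set.Ioc (0:ℝ) 1)]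
      ((0 : AddCircle (1:ℝ) → ℂ) ∘ ((↑) : ℝ → AddCircle (1:ℝ))) := by
    refine ae_eq_comp hmk.aemeasurable ?_
    have : Measure.map ((↑) : ℝ → AddCircle (1:ℝ)) (volume.restrict (Set.Ioc (0:ℝ) 1))
        = AddCircle.haarAddCircle := by
      have := hmp.map_eq
      rw [zero_add] at this
      rw [this, hvol]
    rw [this]
    exact hH0
  rw [hIoc]
  exact (hHcf.symm.trans hpull).mono fun x hx => by simpa using hx

theorem stmt12_aux (N : ℕ) (Γ : Finset ℕ) (h0 : 0 ∈ Γ) (hcard : Γ.card = N)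
    (a b : ℝ) (hab : b - a ≤ N) (F : ℝ → ℂ) (hmeas : Measurable F)
    (hF : MemLp F 2 (volume.restrict (Set.Ioo a b)))
    (horth : ∀ γ ∈ Γ, ∀ n : ℤ,
      ∫ t in Set.Ioo a b,
        (t : ℂ) ^ γ * Complex.exp (-2 * (Real.pi : ℂ) * Complex.I * (n : ℂ) * (t : ℂ)) * F t = 0) :
    ∀ᵐ t ∂(volume.restrict (Set.Ioo a b)), F t = 0 := by
  classical
  rcases le_or_gt b a with hba | hlt
  · have he : Set.Ioo a b = ∅ := Set.Ioo_eq_empty (not_lt.mpr hba)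
    rw [he]; simp
  -- basic setup
  set m0 : ℤ := ⌊a⌋ - 1 with hm0
  set nK : ℕ := (⌈b⌉ - ⌊a⌋ + 3).toNat with hnK
  set emb : ℕ ↪ ℤ := ⟨fun i => m0 + i, fun i j h => by simpa using h⟩ with hemb
  set KS : Finset ℤ := (Finset.range nK).map emb with hKS
  set G : ℝ → ℂ := (Set.Ioo a b).indicator F with hG
  have hGmeas : Measurable G := hmeas.indicator measurableSet_Ioo
  have hfloor : (⌊a⌋ : ℝ) ≤ a := Int.floor_le a
  have hceil : b ≤ (⌈b⌉ : ℝ) := Int.le_ceil b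
  have hnn : (0:ℤ) ≤ ⌈b⌉ - ⌊a⌋ + 3 := by
    have h3 : (⌊a⌋:ℝ) ≤ (⌈b⌉:ℝ) := by linarith
    have := Int.cast_le.mp h3; omega
  have hmemKS : ∀ s : ℝ, s ∈ Set.Ioo (0:ℝ) 1 → ∀ k : ℤ, s + (k:ℝ) ∈ Set.Ioo a b → k ∈ KS := by
    intro s hs k hk
    have hk1 : (⌊a⌋:ℝ) < (k:ℝ) + 1 := by
      have := hs.2; have := hk.1; linarith
    have hk2 : (k:ℝ) < (⌈b⌉:ℝ) := by
      have := hs.1; have := hk.2; linarith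
    have hk1' : ⌊a⌋ ≤ k := by
      have h4 : (⌊a⌋:ℝ) < ((k + 1 : ℤ):ℝ) := by push_cast; linarith
      have := Int.cast_lt.mp h4
      omega
    have hk2' : k ≤ ⌈b⌉ := le_of_lt (Int.cast_lt.mp hk2)
    simp only [hKS, Finset.mem_map, Finset.mem_range, hemb, Function.Embedding.coeFn_mk]
    exact ⟨(k - m0).toNat, by omega, by show m0 + ((k - m0).toNat : ℤ) = k; omega⟩
  have hsubIoc : Set.Ioo a b ⊆ Set.Ioc ((m0:ℝ)) ((m0:ℝ) + (nK:ℕ)) := by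
    intro t ht
    have h1 : (m0:ℝ) < t := by
      have : (m0:ℝ) = (⌊a⌋:ℝ) - 1 := by simp [hm0]
      rw [this]; linarith [ht.1]
    have hz : m0 + (nK:ℤ) = ⌈b⌉ + 2 := by simp only [hnK, hm0]; omega
    have hzr : (m0:ℝ) + (nK:ℕ) = (⌈b⌉:ℝ) + 2 := by exact_mod_cast congrArg (fun z : ℤ => (z:ℝ)) hz
    exact ⟨h1, by rw [hzr]; linarith [ht.2]⟩
  -- norm of the exponential factor
  have hnorm_exp : ∀ (n : ℤ) (t : ℝ), ‖Complex.exp (-2*(π:ℂ)*Complex.I*(n:ℂ)*(t:ℂ))‖ = 1 := by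
    intro n t
    have h1 : (-2*(π:ℂ)*Complex.I*(n:ℂ)*(t:ℂ)) = ((-2*π*(n:ℝ)*t : ℝ) : ℂ) * Complex.I := by
      push_cast; ring
    rw [h1, Complex.norm_exp_ofReal_mul_I]
  have hexp_per : ∀ (n k : ℤ) (s : ℝ),
      Complex.exp (-2*(π:ℂ)*Complex.I*(n:ℂ)*((s + (k:ℝ) : ℝ):ℂ)) =
      Complex.exp (-2*(π:ℂ)*Complex.I*(n:ℂ)*(s:ℂ)) := by
    intro n k s
    have h1 : (-2*(π:ℂ)*Complex.I*(n:ℂ)*((s + (k:ℝ) : ℝ):ℂ)) =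
        -2*(π:ℂ)*Complex.I*(n:ℂ)*(s:ℂ) + ((-(n*k) : ℤ) : ℂ) * (2*(π:ℂ)*Complex.I) := by
      push_cast; ring
    rw [h1, Complex.exp_add, Complex.exp_int_mul_two_pi_mul_I, mul_one]
  -- integrability of F
  have hFint : Integrable F (volume.restrict (Set.Ioo a b)) :=
    memLp_one_iff_integrable.mp (hF.mono_exponent (by norm_num))
  set Cb : ℝ := max |a| |b| with hCb
  have habs : ∀ t ∈ Set.Ioo a b, |t| ≤ Cb := fun t ht => abs_le_max_abs_abs ht.1.le ht.2.le
  -- integrability of the full integrand, supported on (a,b)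
  have hWint : ∀ (γ : ℕ) (n : ℤ), Integrable ((Set.Ioo a b).indicator
      (fun t => (t:ℂ)^γ * Complex.exp (-2*(π:ℂ)*Complex.I*(n:ℂ)*(t:ℂ)) * F t)) volume := by
    intro γ n
    rw [integrable_indicator_iff measurableSet_Ioo]
    refine Integrable.bdd_mul (c := Cb^γ) hFint ?_ ?_
    · exact ((Complex.measurable_ofReal.pow_const γ).mul
        (Complex.measurable_exp.comp (measurable_const.mul Complex.measurable_ofReal))).aestronglyMeasurable
    · filter_upwards [ae_restrict_mem measurableSet_Ioo] with t ht
      rw [norm_mul, hnorm_exp n t, mul_one, norm_pow, Complex.norm_real, Real.norm_eq_abs]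
      exact pow_le_pow_left₀ (abs_nonneg _) (habs t ht) γ
  have hW0 : ∀ γ ∈ Γ, ∀ n : ℤ, ∫ t, (Set.Ioo a b).indicator
      (fun t => (t:ℂ)^γ * Complex.exp (-2*(π:ℂ)*Complex.I*(n:ℂ)*(t:ℂ)) * F t) t ∂volume = 0 := by
    intro γ hγ n
    rw [integral_indicator measurableSet_Ioo]
    exact horth γ hγ n
  -- L² of the weighted functions
  have hg2 : ∀ γ : ℕ, MemLp (fun t : ℝ => (t:ℂ)^γ * G t) 2 volume := by
    intro γ
    have h1 : MemLp (fun t : ℝ => (t:ℂ)^γ * F t) 2 (volume.restrict (Set.Ioo a b)) := by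
      refine MemLp.of_le_mul (c := Cb^γ) hF
        ((Complex.measurable_ofReal.pow_const γ).mul hmeas).aestronglyMeasurable ?_
      filter_upwards [ae_restrict_mem measurableSet_Ioo] with t ht
      rw [norm_mul, norm_pow, Complex.norm_real, Real.norm_eq_abs]
      exact mul_le_mul_of_nonneg_right (pow_le_pow_left₀ (abs_nonneg _) (habs t ht) γ)
        (norm_nonneg _)
    have h2 : (fun t : ℝ => (t:ℂ)^γ * G t) = (Set.Ioo a b).indicator (fun t : ℝ => (t:ℂ)^γ * F t) := by
      funext t
      by_cases ht : t ∈ Set.Ioo a b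
      · simp [hG, Set.indicator_of_mem ht]
      · simp [hG, Set.indicator_of_notMem ht]
    rw [h2, memLp_indicator_iff_restrict measurableSet_Ioo]
    exact h1
  -- the periodization
  obtain ⟨P, hPdef⟩ : ∃ P : ℕ → ℝ → ℂ,
      P = fun γ s => ∑ k ∈ KS, ((s + (k:ℝ) : ℝ) : ℂ)^γ * G (s + (k:ℝ)) := ⟨_, rfl⟩
  have hPmeas : ∀ γ, Measurable (P γ) := by
    intro γ
    rw [hPdef]
    refine Finset.measurable_sum _ fun k _ => ?_
    exact ((Complex.measurable_ofReal.comp (measurable_add_const ((k:ℝ)))).pow_const γ).mul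
      (hGmeas.comp (measurable_add_const _))
  have hPmem : ∀ γ, MemLp (P γ) 2 (volume.restrict (Set.Ioo (0:ℝ) 1)) := by
    intro γ
    have hterm : ∀ k : ℤ, MemLp (fun s : ℝ => ((s + (k:ℝ) : ℝ) : ℂ)^γ * G (s + (k:ℝ))) 2 volume := by
      intro k
      have mpk : MeasurePreserving (fun s : ℝ => s + (k:ℝ)) volume volume :=
        ⟨measurable_add_const _, map_add_right_eq_self volume _⟩
      exact (hg2 γ).comp_measurePreserving mpk
    have hsum : MemLp (fun s : ℝ => ∑ k ∈ KS, ((s + (k:ℝ) : ℝ) : ℂ)^γ * G (s + (k:ℝ))) 2 volume :=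
      memLp_finset_sum KS (fun k _ => hterm k)
    rw [hPdef]
    exact hsum.restrict _
  -- Fourier coefficients of the periodization vanish
  have hPol : ∀ γ ∈ Γ, ∀ n : ℤ,
      ∫ s in Set.Ioo (0:ℝ) 1, Complex.exp (-2*(π:ℂ)*Complex.I*(n:ℂ)*(s:ℂ)) * P γ s = 0 := by
    intro γ hγ n
    set W : ℝ → ℂ := (Set.Ioo a b).indicator
      (fun t => (t:ℂ)^γ * Complex.exp (-2*(π:ℂ)*Complex.I*(n:ℂ)*(t:ℂ)) * F t) with hWdef
    have hkey : ∀ (k : ℤ) (s : ℝ),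
        Complex.exp (-2*(π:ℂ)*Complex.I*(n:ℂ)*(s:ℂ)) * (((s + (k:ℝ) : ℝ) : ℂ)^γ * G (s + (k:ℝ)))
        = W (s + (k:ℝ)) := by
      intro k s
      by_cases hm : s + (k:ℝ) ∈ Set.Ioo a b
      · simp only [hWdef, hG, Set.indicator_of_mem hm]
        rw [hexp_per n k s]
        ring
      · simp only [hWdef, hG, Set.indicator_of_notMem hm, mul_zero]
    have hWi : Integrable W volume := hWint γ n
    have hWtrans : ∀ k : ℤ, Integrable (fun s : ℝ => W (s + (k:ℝ))) volume := by
      intro k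
      have mpk : MeasurePreserving (fun s : ℝ => s + (k:ℝ)) volume volume :=
        ⟨measurable_add_const _, map_add_right_eq_self volume _⟩
      exact memLp_one_iff_integrable.mp
        ((memLp_one_iff_integrable.mpr hWi).comp_measurePreserving mpk)
    have hstep : ∀ k : ℤ, ∫ s in Set.Ioo (0:ℝ) 1, W (s + (k:ℝ)) =
        ∫ t in ((k:ℝ))..((k:ℝ)+1), W t := by
      intro k
      have h1 : ∫ s in Set.Ioo (0:ℝ) 1, W (s + (k:ℝ)) = ∫ s in (0:ℝ)..1, W (s + (k:ℝ)) := by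
        rw [intervalIntegral.integral_of_le zero_le_one, integral_Ioc_eq_integral_Ioo]
      rw [h1, intervalIntegral.integral_comp_add_right (fun t => W t) ((k:ℝ)), zero_add,
        add_comm (1:ℝ) ((k:ℝ))]
    have hc1 : ∫ s in Set.Ioo (0:ℝ) 1, Complex.exp (-2*(π:ℂ)*Complex.I*(n:ℂ)*(s:ℂ)) * P γ s
        = ∫ s in Set.Ioo (0:ℝ) 1, ∑ k ∈ KS, W (s + (k:ℝ)) := by
      refine setIntegral_congr_fun measurableSet_Ioo fun s _ => ?_
      simp only [hPdef]
      rw [Finset.mul_sum]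
      exact Finset.sum_congr rfl fun k _ => hkey k s
    have hc2 : ∫ s in Set.Ioo (0:ℝ) 1, ∑ k ∈ KS, W (s + (k:ℝ))
        = ∑ k ∈ KS, ∫ s in Set.Ioo (0:ℝ) 1, W (s + (k:ℝ)) :=
      integral_finset_sum KS fun k _ => (hWtrans k).restrict
    have hc3 : ∑ k ∈ KS, ∫ t in ((k:ℝ))..((k:ℝ)+1), W t
        = ∫ t in ((m0:ℝ))..((m0:ℝ) + (nK:ℕ)), W t := by
      rw [hKS, Finset.sum_map]
      have hsum := intervalIntegral.sum_integral_adjacent_intervals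
        (a := fun i : ℕ => (m0:ℝ) + i) (n := nK) (f := W) (μ := volume)
        (fun i _ => hWi.intervalIntegrable)
      have hcong : ∀ i ∈ Finset.range nK,
          (∫ t in (((emb i : ℤ)):ℝ)..((((emb i : ℤ)):ℝ)+1), W t)
          = ∫ t in ((m0:ℝ) + (i:ℕ))..((m0:ℝ) + ((i+1 : ℕ):ℝ)), W t := by
        intro i _
        have h2 : ((emb i : ℤ):ℝ) = (m0:ℝ) + (i:ℕ) := by
          show ((m0 + (i:ℤ) : ℤ):ℝ) = _
          push_cast; ring
        rw [h2]
        congr 1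
        push_cast; ring
      rw [Finset.sum_congr rfl hcong]
      have h0 : (m0:ℝ) + ((0:ℕ):ℝ) = (m0:ℝ) := by norm_num
      calc ∑ i ∈ Finset.range nK, ∫ t in ((m0:ℝ) + (i:ℕ))..((m0:ℝ) + ((i+1 : ℕ):ℝ)), W t
          = ∫ t in ((m0:ℝ) + ((0:ℕ):ℝ))..((m0:ℝ) + (nK:ℕ)), W t := hsum
        _ = ∫ t in ((m0:ℝ))..((m0:ℝ) + (nK:ℕ)), W t := by rw [h0]
    have hc4 : ∫ t in ((m0:ℝ))..((m0:ℝ) + (nK:ℕ)), W t = 0 := by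
      have hle : (m0:ℝ) ≤ (m0:ℝ) + (nK:ℕ) := le_add_of_nonneg_right (Nat.cast_nonneg _)
      rw [intervalIntegral.integral_of_le hle, hWdef,
        setIntegral_indicator measurableSet_Ioo,
        Set.inter_eq_self_of_subset_right hsubIoc]
      exact horth γ hγ n
    rw [hc1, hc2]
    rw [Finset.sum_congr rfl fun k _ => hstep k]
    rw [hc3, hc4]
  -- a.e. vanishing of all periodizations
  have hPae : ∀ γ ∈ Γ, ∀ᵐ s ∂(volume.restrict (Set.Ioo (0:ℝ) 1)), P γ s = 0 :=
    fun γ hγ => fourier_unique (P γ) (hPmeas γ) (hPmem γ) (hPol γ hγ)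
  -- choice of exponent subsets
  have hTK : ∀ K : Finset ℤ, K.card ≤ N → ∃ T : Finset ℕ, T ⊆ Γ ∧ T.card = K.card :=
    fun K hK => Finset.exists_subset_card_eq (s := Γ) (n := K.card) (by rw [hcard]; exact hK)
  obtain ⟨TK, hTKspec⟩ : ∃ TK : Finset ℤ → Finset ℕ,
      ∀ K : Finset ℤ, K.card ≤ N → TK K ⊆ Γ ∧ (TK K).card = K.card := by
    refine ⟨fun K => if h : K.card ≤ N then (hTK K h).choose else ∅, fun K h => ?_⟩
    simp only [dif_pos h]
    exact (hTK K h).choose_spec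
  -- the bad set
  obtain ⟨Bad, hBadDef⟩ : ∃ B : Set ℝ, B =
      ⋃ K ∈ (↑(Finset.filter (fun K : Finset ℤ => K.card ≤ N) KS.powerset) : Set (Finset ℤ)),
        {s : ℝ | ∃ c : ℤ → ℂ, (∀ γ ∈ TK K, ∑ k ∈ K, c k * ((s + (k:ℝ) : ℝ) : ℂ)^γ = 0) ∧
          ¬(∀ k ∈ K, c k = 0)} := ⟨_, rfl⟩
  have hBadFin : Bad.Finite := by
    rw [hBadDef]
    refine Set.Finite.biUnion (Finset.finite_toSet _) ?_
    intro K hK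
    have hKle : K.card ≤ N := (Finset.mem_filter.mp (Finset.mem_coe.mp hK)).2
    exact badFinite K (TK K) (hTKspec K hKle).2
  have hBadnull : volume Bad = 0 := hBadFin.measure_zero _
  have hae : ∀ᵐ s ∂(volume.restrict (Set.Ioo (0:ℝ) 1)),
      (∀ γ ∈ Γ, P γ s = 0) ∧ s ∉ Bad ∧ s ∈ Set.Ioo (0:ℝ) 1 := by
    refine Filter.Eventually.and ?_ (Filter.Eventually.and ?_ (ae_restrict_mem measurableSet_Ioo))
    · have h7 : ∀ᵐ s ∂(volume.restrict (Set.Ioo (0:ℝ) 1)), ∀ γ ∈ (↑Γ : Set ℕ), P γ s = 0 :=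
        (ae_ball_iff Γ.countable_toSet).mpr (fun γ hγ => hPae γ (Finset.mem_coe.mp hγ))
      exact h7.mono fun s hs γ hγ => hs γ (Finset.mem_coe.mpr hγ)
    · exact ae_restrict_of_ae (measure_eq_zero_iff_ae_notMem.mp hBadnull)
  -- the pointwise linear-algebra argument
  have hpoint : ∀ s : ℝ, s ∈ Set.Ioo (0:ℝ) 1 → (∀ γ ∈ Γ, P γ s = 0) → s ∉ Bad →
      ∀ k : ℤ, s + (k:ℝ) ∈ Set.Ioo a b → F (s + (k:ℝ)) = 0 := by
    intro s hs hPz hB k hk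
    set Kf : Finset ℤ := KS.filter (fun j => s + (j:ℝ) ∈ Set.Ioo a b) with hKf
    have hKfcard : Kf.card ≤ N := by
      rcases Finset.eq_empty_or_nonempty Kf with hemp | hne
      · simp [hemp]
      · have h1 : s + ((Kf.min' hne : ℤ):ℝ) ∈ Set.Ioo a b :=
          (Finset.mem_filter.mp (Kf.min'_mem hne)).2
        have h2 : s + ((Kf.max' hne : ℤ):ℝ) ∈ Set.Ioo a b :=
          (Finset.mem_filter.mp (Kf.max'_mem hne)).2
        have h3 : ((Kf.max' hne : ℤ):ℝ) - ((Kf.min' hne : ℤ):ℝ) < (N:ℝ) := by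
          have ha1 := h1.1; have hb2 := h2.2; linarith
        have h4 : Kf.max' hne - Kf.min' hne < (N:ℤ) := by
          have : ((Kf.max' hne - Kf.min' hne : ℤ):ℝ) < ((N:ℤ):ℝ) := by push_cast; linarith
          exact_mod_cast this
        have hsub : Kf ⊆ Finset.Icc (Kf.min' hne) (Kf.max' hne) := fun x hx =>
          Finset.mem_Icc.mpr ⟨Finset.min'_le _ _ hx, Finset.le_max' _ _ hx⟩
        have h5 := Finset.card_le_card hsub
        rw [Int.card_Icc] at h5
        omega
    have hKfKS : Kf ⊆ KS := Finset.filter_subset _ _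
    have hTs := hTKspec Kf hKfcard
    have hall : ∀ j ∈ Kf, G (s + (j:ℝ)) = 0 := by
      by_contra hcon
      apply hB
      rw [hBadDef]
      have hmemf : Kf ∈ (↑(Finset.filter (fun K : Finset ℤ => K.card ≤ N) KS.powerset) :
          Set (Finset ℤ)) :=
        Finset.mem_coe.mpr (Finset.mem_filter.mpr ⟨Finset.mem_powerset.mpr hKfKS, hKfcard⟩)
      refine Set.mem_biUnion hmemf ?_
      refine ⟨fun j => G (s + (j:ℝ)), ?_, hcon⟩
      intro γ hγ
      have e1 : ∑ j ∈ Kf, G (s + (j:ℝ)) * ((s + (j:ℝ) : ℝ) : ℂ)^γ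
          = ∑ j ∈ Kf, ((s + (j:ℝ) : ℝ) : ℂ)^γ * G (s + (j:ℝ)) :=
        Finset.sum_congr rfl (fun j _ => mul_comm _ _)
      have e2 : ∑ j ∈ Kf, ((s + (j:ℝ) : ℝ) : ℂ)^γ * G (s + (j:ℝ))
          = ∑ j ∈ KS, ((s + (j:ℝ) : ℝ) : ℂ)^γ * G (s + (j:ℝ)) := by
        refine Finset.sum_subset hKfKS ?_
        intro j hjKS hjn
        have hnm : ¬ (s + (j:ℝ) ∈ Set.Ioo a b) := by
          intro hmem; exact hjn (Finset.mem_filter.mpr ⟨hjKS, hmem⟩)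
        rw [hG, Set.indicator_of_notMem hnm, mul_zero]
      have e3 : ∑ j ∈ KS, ((s + (j:ℝ) : ℝ) : ℂ)^γ * G (s + (j:ℝ)) = P γ s := by
        simp only [hPdef]
      rw [e1, e2, e3]
      exact hPz γ (hTs.1 hγ)
    have hkKf : k ∈ Kf := Finset.mem_filter.mpr ⟨hmemKS s hs k hk, hk⟩
    have h8 := hall k hkKf
    rw [hG, Set.indicator_of_mem hk] at h8
    exact h8
  -- conclusion
  have hae2 : ∀ᵐ s ∂(volume.restrict (Set.Ioo (0:ℝ) 1)),
      ∀ k : ℤ, s + (k:ℝ) ∈ Set.Ioo a b → F (s + (k:ℝ)) = 0 :=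
    hae.mono fun s hs => hpoint s hs.2.2 hs.1 hs.2.1
  obtain ⟨E, hEdef⟩ : ∃ E : Set ℝ, E =
      {s : ℝ | ¬ ∀ k : ℤ, s + (k:ℝ) ∈ Set.Ioo a b → F (s + (k:ℝ)) = 0} ∩ Set.Ioo (0:ℝ) 1 :=
    ⟨_, rfl⟩
  have hEnull : volume E = 0 := by
    rw [hEdef, ← Measure.restrict_apply' measurableSet_Ioo]
    exact ae_iff.mp hae2
  rw [ae_iff, Measure.restrict_apply' measurableSet_Ioo]
  have hcover : {t : ℝ | ¬ F t = 0} ∩ Set.Ioo a b ⊆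
      (⋃ k : ℤ, (fun t : ℝ => t + (-(k:ℝ))) ⁻¹' E) ∪ (⋃ k : ℤ, ({((k:ℤ):ℝ)} : Set ℝ)) := by
    rintro t ⟨htF, htab⟩
    rcases eq_or_ne (Int.fract t) 0 with hf0 | hfne
    · refine Or.inr (Set.mem_iUnion.mpr ⟨⌊t⌋, ?_⟩)
      have h9 : t - ((⌊t⌋:ℤ):ℝ) = Int.fract t := Int.self_sub_floor t
      have : t = ((⌊t⌋:ℤ):ℝ) := by rw [hf0] at h9; linarith
      exact Set.mem_singleton_iff.mpr this
    · refine Or.inl (Set.mem_iUnion.mpr ⟨⌊t⌋, ?_⟩)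
      show t + (-((⌊t⌋:ℤ):ℝ)) ∈ E
      have h9 : t - ((⌊t⌋:ℤ):ℝ) = Int.fract t := Int.self_sub_floor t
      have hsval : t + (-((⌊t⌋:ℤ):ℝ)) = Int.fract t := by rw [← h9]; ring
      rw [hEdef]
      constructor
      · rw [Set.mem_setOf_eq]
        intro hCl
        apply htF
        have h6 : (t + -((⌊t⌋:ℤ):ℝ)) + ((⌊t⌋:ℤ):ℝ) = t := by ring
        have h7 := hCl ⌊t⌋ (by rw [h6]; exact htab)
        rw [h6] at h7
        exact h7
      · rw [hsval]
        exact ⟨lt_of_le_of_ne (Int.fract_nonneg t) (Ne.symm hfne), Int.fract_lt_one t⟩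
  refine measure_mono_null hcover (measure_union_null ?_ ?_)
  · refine measure_iUnion_null fun k => ?_
    rw [measure_preimage_add_right]
    exact hEnull
  · exact measure_iUnion_null fun k => volume_singleton


theorem stmt_12 (N : ℕ) (Γ : Finset ℕ) (h0 : 0 ∈ Γ) (hcard : Γ.card = N)
    (a b : ℝ) (hab : b - a ≤ N) (F : ℝ → ℂ)
    (hF : MemLp F 2 (volume.restrict (Set.Ioo a b)))
    (horth : ∀ γ ∈ Γ, ∀ n : ℤ,
      ∫ t in Set.Ioo a b,
        (t : ℂ) ^ γ * Complex.exp (-2 * (Real.pi : ℂ) * Complex.I * (n : ℂ) * (t : ℂ)) * F t = 0) :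
    ∀ᵐ t ∂(volume.restrict (Set.Ioo a b)), F t = 0 := by
  have hsm := hF.aestronglyMeasurable
  have haeq : F =ᵐ[volume.restrict (Set.Ioo a b)] hsm.mk F := hsm.ae_eq_mk
  have hF' : MemLp (hsm.mk F) 2 (volume.restrict (Set.Ioo a b)) := hF.ae_eq haeq
  have hmeas' : Measurable (hsm.mk F) := hsm.stronglyMeasurable_mk.measurable
  have horth' : ∀ γ ∈ Γ, ∀ n : ℤ,
      ∫ t in Set.Ioo a b,
        (t : ℂ) ^ γ * Complex.exp (-2 * (Real.pi : ℂ) * Complex.I * (n : ℂ) * (t : ℂ)) *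
          (hsm.mk F) t = 0 := by
    intro γ hγ n
    rw [← horth γ hγ n]
    refine integral_congr_ae ?_
    filter_upwards [haeq] with t ht
    rw [ht]
  have hmain := stmt12_aux N Γ h0 hcard a b hab (hsm.mk F) hmeas' hF' horth'
  filter_upwards [hmain, haeq] with t h1 h2
  rw [h2]
  exact h1
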